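/- arXiv:2503.23889 — 2 statements merged into one kernel-verified Lean document; each statement's English description precedes it below -/
import Mathlib

section
/- Let 𝒥' be a finite nonempty set of paths, each path a finite nonempty list of edges, with edge values g : E → [1, ∞). Suppose that for all distinct paths J, J' ∈ 𝒥', max_{e∈J} g(e) ≠ max_{e∈J'} g(e). Then there exists λ₀ > 0 such that for all λ ≥ λ₀, argmin_{J ∈ 𝒥'} Σ_{e∈J} g(e)^λ = argmin_{J ∈ 𝒥'} max_{e∈J} g(e). -/
open Real

/-- Bottleneck (maximum) edge value along a path. -/
noncomputable def pMax {E : Type*} (g : E → ℝ) (J : List E) : ℝ :=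
  (J.map g).foldr max 1

/-- Sum of λ-th powers of the edge values along a path. -/
noncomputable def pPowSum {E : Type*} (g : E → ℝ) (lam : ℝ) (J : List E) : ℝ :=
  (J.map (fun e => g e ^ lam)).sum

private lemma one_le_foldr_max (l : List ℝ) : 1 ≤ l.foldr max 1 := by
  induction l with
  | nil => simp
  | cons a t ih => simpa using Or.inr ih

private lemma le_foldr_max (l : List ℝ) : ∀ x ∈ l, x ≤ l.foldr max 1 := by
  induction l with
  | nil => simp
  | cons a t ih =>
    intro x hx
    rcases List.mem_cons.1 hx with h | h
    · simp [h]
    · exact le_trans (ih x h) (by simp)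

private lemma foldr_max_mem (l : List ℝ) (hl : l ≠ []) (h1 : ∀ x ∈ l, 1 ≤ x) :
    l.foldr max 1 ∈ l := by
  induction l with
  | nil => exact absurd rfl hl
  | cons a t ih =>
    cases t with
    | nil =>
        have ha : max a (1:ℝ) = a := max_eq_left (h1 a (by simp))
        simp [ha]
    | cons b s =>
      have ht : (b :: s : List ℝ) ≠ [] := by simp
      have := ih ht (fun x hx => h1 x (List.mem_cons_of_mem _ hx))
      by_cases h : (b :: s : List ℝ).foldr max 1 ≤ a
      · simp only [List.foldr_cons] at *
        rw [max_eq_left h]; exact List.mem_cons_self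
      · push_neg at h
        simp only [List.foldr_cons] at *
        rw [max_eq_right (le_of_lt h)]
        exact List.mem_cons_of_mem _ this

private lemma one_le_pMax {E : Type*} (g : E → ℝ) (J : List E) : 1 ≤ pMax g J :=
  one_le_foldr_max _

private lemma exists_pMax_eq {E : Type*} (g : E → ℝ) (hg : ∀ e, 1 ≤ g e)
    (J : List E) (hJ : J ≠ []) : ∃ e ∈ J, g e = pMax g J := by
  have hmem : pMax g J ∈ J.map g := by
    apply foldr_max_mem
    · simpa using hJ
    · intro x hx
      rcases List.mem_map.1 hx with ⟨e, _, rfl⟩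
      exact hg e
  rcases List.mem_map.1 hmem with ⟨e, he, heq⟩
  exact ⟨e, he, heq⟩

private lemma le_pMax {E : Type*} (g : E → ℝ) (J : List E) (e : E) (he : e ∈ J) :
    g e ≤ pMax g J :=
  le_foldr_max _ _ (List.mem_map_of_mem (f := g) he)

/-- lower bound: pMax^lam ≤ pPowSum -/
private lemma pMax_rpow_le_pPowSum {E : Type*} (g : E → ℝ) (hg : ∀ e, 1 ≤ g e)
    (lam : ℝ) (J : List E) (hJ : J ≠ []) :
    pMax g J ^ lam ≤ pPowSum g lam J := by
  rcases exists_pMax_eq g hg J hJ with ⟨e, he, heq⟩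
  have : g e ^ lam ∈ J.map (fun e => g e ^ lam) :=
    List.mem_map_of_mem he
  rw [← heq]
  apply List.single_le_sum _ _ this
  intro x hx
  rcases List.mem_map.1 hx with ⟨e', _, rfl⟩
  exact Real.rpow_nonneg (le_trans zero_le_one (hg e')) _

/-- upper bound: pPowSum ≤ length * pMax^lam -/
private lemma pPowSum_le {E : Type*} (g : E → ℝ) (hg : ∀ e, 1 ≤ g e)
    (lam : ℝ) (hlam : 0 ≤ lam) (J : List E) :
    pPowSum g lam J ≤ (J.length : ℝ) * pMax g J ^ lam := by
  have h : ∀ x ∈ J.map (fun e => g e ^ lam), x ≤ pMax g J ^ lam := by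
    intro x hx
    rcases List.mem_map.1 hx with ⟨e, he, rfl⟩
    exact Real.rpow_le_rpow (le_trans zero_le_one (hg e)) (le_pMax g J e he) hlam
  calc pPowSum g lam J ≤ (J.map (fun e => g e ^ lam)).length • pMax g J ^ lam :=
        List.sum_le_card_nsmul _ _ h
    _ = (J.length : ℝ) * pMax g J ^ lam := by
        rw [List.length_map, nsmul_eq_mul]

theorem stmt_9 {E : Type*} [DecidableEq E] (g : E → ℝ) (hg : ∀ e : E, 1 ≤ g e)
    (𝒥 : Finset (List E)) (h𝒥ne : 𝒥.Nonempty) (h𝒥 : ∀ J ∈ 𝒥, J ≠ [])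
    (hdist : ∀ J ∈ 𝒥, ∀ J' ∈ 𝒥, J ≠ J' → pMax g J ≠ pMax g J') :
    ∃ lam₀ : ℝ, 0 < lam₀ ∧ ∀ lam : ℝ, lam₀ ≤ lam →
      {J ∈ 𝒥 | ∀ J' ∈ 𝒥, pPowSum g lam J ≤ pPowSum g lam J'} =
        {J ∈ 𝒥 | ∀ J' ∈ 𝒥, pMax g J ≤ pMax g J'} := by
  classical
  -- J* : minimizer of pMax
  obtain ⟨Js, hJs𝒥, hJsmin⟩ := 𝒥.exists_min_image (pMax g) h𝒥ne
  have hJsne : Js ≠ [] := h𝒥 Js hJs𝒥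
  -- for each J' with larger pMax, find a threshold
  have hthr : ∀ J' ∈ 𝒥, ∃ t : ℝ, ∀ lam, t ≤ lam → 1 ≤ lam →
      pMax g Js < pMax g J' → pPowSum g lam Js < pPowSum g lam J' := by
    intro J' hJ'
    by_cases hlt : pMax g Js < pMax g J'
    · set M := pMax g Js
      set M' := pMax g J'
      have hM1 : 1 ≤ M := one_le_pMax g Js
      have hM'pos : 0 < M' := lt_of_lt_of_le zero_lt_one (one_le_pMax g J')
      have hb0 : (0:ℝ) ≤ M / M' := div_nonneg (le_trans zero_le_one hM1) hM'pos.le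
      have hb1 : M / M' < 1 := (div_lt_one hM'pos).2 hlt
      have htend : Filter.Tendsto (fun lam : ℝ => (Js.length : ℝ) * (M / M') ^ lam)
          Filter.atTop (nhds 0) := by
        have := tendsto_rpow_atTop_of_base_lt_one (M / M') (by linarith) hb1
        simpa using this.const_mul (Js.length : ℝ)
      have hev : ∀ᶠ lam : ℝ in Filter.atTop,
          (Js.length : ℝ) * (M / M') ^ lam < 1 :=
        htend.eventually_lt_const zero_lt_one
      rcases Filter.eventually_atTop.1 hev with ⟨t, ht⟩
      refine ⟨t, fun lam hlam hlam1 _ => ?_⟩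
      have hlam0 : (0:ℝ) ≤ lam := le_trans zero_le_one hlam1
      have h1 : pPowSum g lam Js ≤ (Js.length : ℝ) * M ^ lam :=
        pPowSum_le g hg lam hlam0 Js
      have h2 : M' ^ lam ≤ pPowSum g lam J' :=
        pMax_rpow_le_pPowSum g hg lam J' (h𝒥 J' hJ')
      have hM'l : 0 < M' ^ lam := Real.rpow_pos_of_pos hM'pos _
      have key : (Js.length : ℝ) * M ^ lam < M' ^ lam := by
        have := ht lam hlam
        rw [Real.div_rpow (le_trans zero_le_one hM1) hM'pos.le] at this
        calc (Js.length : ℝ) * M ^ lam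
            = (Js.length : ℝ) * (M ^ lam / M' ^ lam) * M' ^ lam := by
              field_simp
          _ < 1 * M' ^ lam := by
              apply mul_lt_mul_of_pos_right _ hM'l
              exact this
          _ = M' ^ lam := one_mul _
      linarith
    · exact ⟨0, fun lam _ _ h => absurd h hlt⟩
  -- choose thresholds
  choose t ht using hthr
  -- λ₀
  set lam₀ : ℝ := max 1 (𝒥.sup' h𝒥ne (fun J' => if h : J' ∈ 𝒥 then t J' h else 0))
  refine ⟨lam₀, lt_of_lt_of_le zero_lt_one (le_max_left _ _), fun lam hlam => ?_⟩
  have hlam1 : 1 ≤ lam := le_trans (le_max_left _ _) hlam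
  have hlamthr : ∀ J' (h : J' ∈ 𝒥), t J' h ≤ lam := by
    intro J' h
    refine le_trans (le_trans ?_ (le_max_right 1 _)) hlam
    have := Finset.le_sup' (fun J' => if h : J' ∈ 𝒥 then t J' h else 0) h
    simpa only [dif_pos h] using this
  -- strict inequality for J' ≠ Js
  have hstrict : ∀ J' ∈ 𝒥, J' ≠ Js → pPowSum g lam Js < pPowSum g lam J' := by
    intro J' hJ' hne
    have hlt : pMax g Js < pMax g J' :=
      lt_of_le_of_ne (hJsmin J' hJ') (hdist Js hJs𝒥 J' hJ' (Ne.symm hne))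
    exact ht J' hJ' lam (hlamthr J' hJ') hlam1 hlt
  -- both sets equal {Js}
  ext J
  simp only [Finset.mem_filter]
  constructor
  · rintro ⟨hJ𝒥, hJle⟩
    refine ⟨hJ𝒥, fun J' hJ' => ?_⟩
    -- show J = Js
    have hJeq : J = Js := by
      by_contra hne
      exact absurd (hJle Js hJs𝒥) (not_le.2 (hstrict J hJ𝒥 hne))
    rw [hJeq]
    exact hJsmin J' hJ'
  · rintro ⟨hJ𝒥, hJle⟩
    have hJeq : J = Js := by
      by_contra hne
      have h1 : pMax g J ≤ pMax g Js := hJle Js hJs𝒥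
      have h2 : pMax g Js ≤ pMax g J := hJsmin J hJ𝒥
      exact hdist J hJ𝒥 Js hJs𝒥 hne (le_antisymm h1 h2)
    subst hJeq
    refine ⟨hJ𝒥, fun J' hJ' => ?_⟩
    by_cases hne : J' = J
    · rw [hne]
    · exact le_of_lt (hstrict J' hJ' hne)
end

section
/- Let G be a finite directed graph, and let J₁ be a path from s to d. For each vertex u on J₁ with u ≠ d, let the root path R(u) be the prefix of J₁ from s to u, and define D(u) as the set of paths from s to d that follow R(u) and then deviate, i.e., whose next edge after u differs from the outgoing edge of u on J₁, and which do not revisit any internal vertex of R(u). Then every path from s to d other than J₁ that is simple belongs to D(u) for exactly one branch vertex u of J₁; that is, the sets D(u) over branch vertices u partition the set of simple s–d paths distinct from J₁. -/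
/-- A simple path from `s` to `t` in a directed graph `G`, represented as its
list of vertices (with no repeated vertex). -/
def IsSimplePath {V : Type*} (G : V → V → Prop) (s t : V) (p : List V) : Prop :=
  p ≠ [] ∧ p.head? = some s ∧ p.getLast? = some t ∧ p.Chain' G ∧ p.Nodup

/-- Path `P` deviates from the path `J₁` exactly at the branch vertex with
index `i` on `J₁`: it shares the root path (prefix of `J₁` up to that vertex)
and its next vertex differs from the next vertex of `J₁`. -/
def DeviatesAt {V : Type*} (J₁ P : List V) (i : ℕ) : Prop :=
  i + 1 < J₁.length ∧ P.take (i + 1) = J₁.take (i + 1) ∧ P[i + 1]? ≠ J₁[i + 1]?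

theorem stmt_12 {V : Type*} [DecidableEq V] (G : V → V → Prop) (s d : V)
    (J₁ : List V) (hJ₁ : IsSimplePath G s d J₁)
    (P : List V) (hP : IsSimplePath G s d P) (hne : P ≠ J₁) :
    ∃! i : ℕ, DeviatesAt J₁ P i := by
  classical
  obtain ⟨hPne, hPh, hPl, -, hPnd⟩ := hP
  obtain ⟨hJne, hJh, hJl, -, hJnd⟩ := hJ₁
  have hex : ∃ n : ℕ, P[n]? ≠ J₁[n]? := by
    by_contra h
    push_neg at h
    exact hne (List.ext_getElem? h)
  set i₀ := Nat.find hex with hi₀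
  have hspec : P[i₀]? ≠ J₁[i₀]? := Nat.find_spec hex
  have hmin : ∀ m < i₀, P[m]? = J₁[m]? := fun m hm => by
    simpa using Nat.find_min hex hm
  have h0 : i₀ ≠ 0 := by
    intro h
    apply hspec
    rw [h, ← List.head?_eq_getElem?, ← List.head?_eq_getElem?, hPh, hJh]
  have htake : ∀ n ≤ i₀, P.take n = J₁.take n := by
    intro n hn
    apply List.ext_getElem?
    intro m
    rcases lt_or_ge m n with hm | hm
    · rw [List.getElem?_take_of_lt hm, List.getElem?_take_of_lt hm]
      exact hmin m (lt_of_lt_of_le hm hn)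
    · rw [List.getElem?_eq_none_iff.2, List.getElem?_eq_none_iff.2] <;>
        simp [Nat.le_min, hm]
  -- lengths
  have hPlen : i₀ < P.length := by
    by_contra h
    push_neg at h
    -- P = J₁.take i₀
    have hPi : P = J₁.take i₀ := by
      rw [← htake i₀ le_rfl, List.take_of_length_le h]
    have hJi : i₀ < J₁.length := by
      by_contra h2
      push_neg at h2
      apply hspec
      rw [List.getElem?_eq_none_iff.2 h, List.getElem?_eq_none_iff.2 h2]
    -- d appears twice in J₁
    have h1 : 0 < P.length := List.length_pos_iff.2 hPne
    have hd1 : J₁[P.length - 1]? = some d := by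
      rw [← hmin (P.length - 1) (by omega)]
      rw [← List.getLast?_eq_getElem? (l := P), hPl]
    have hd2 : J₁[J₁.length - 1]? = some d := by
      rw [← List.getLast?_eq_getElem? (l := J₁), hJl]
    have : P.length - 1 = J₁.length - 1 := by
      apply (List.getElem?_inj (by omega) hJnd).1
      rw [hd1, hd2]
    have hPlen' : P.length = i₀ ⊓ J₁.length := by rw [hPi]; simp
    omega
  have hJlen : i₀ < J₁.length := by
    by_contra h
    push_neg at h
    have hJi : J₁ = P.take i₀ := by
      rw [htake i₀ le_rfl, List.take_of_length_le h]
    have h1 : 0 < J₁.length := List.length_pos_iff.2 hJne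
    have hd1 : P[J₁.length - 1]? = some d := by
      rw [hmin (J₁.length - 1) (by omega)]
      rw [← List.getLast?_eq_getElem? (l := J₁), hJl]
    have hd2 : P[P.length - 1]? = some d := by
      rw [← List.getLast?_eq_getElem? (l := P), hPl]
    have : J₁.length - 1 = P.length - 1 := by
      apply (List.getElem?_inj (by omega) hPnd).1
      rw [hd1, hd2]
    have : J₁.length = i₀ ⊓ P.length := by rw [hJi]; simp
    omega
  obtain ⟨k, hk⟩ : ∃ k, i₀ = k + 1 := ⟨i₀ - 1, by omega⟩
  rw [hk] at hspec hmin htake hJlen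
  refine ⟨k, ⟨hJlen, htake (k + 1) le_rfl, hspec⟩, ?_⟩
  rintro j ⟨hj1, hj2, hj3⟩
  by_contra hjk
  rcases lt_or_gt_of_ne hjk with h | h
  · -- j < k : then j+1 < k+1 = i₀, but get? differ at j+1
    exact hj3 (hmin (j + 1) (by omega))
  · -- j > k : take (j+1) equal gives get? (k+1) equal
    apply hspec
    have := congrArg (fun l => l[k + 1]?) hj2
    simpa [List.getElem?_take_of_lt (show k + 1 < j + 1 by omega)] using this
end
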